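/- Let λ : ℕ → ℝ be supported on squarefree integers coprime to A, and define y_r = μ(r) f_1(r) Σ'_d λ_{dr}/f(dr), where Σ' runs over squarefree d coprime to A (and coprime to r, so dr is squarefree). Then λ_d = μ(d) f(d) Σ'_r y_{rd}/f_1(rd) for all squarefree d coprime to A, where f(d)=∏_{p|d} p/k and f_1(d)=∏_{p|d}(p-k)/k. -/

import Mathlib

open scoped Classical

private lemma sum_divisors_moebius' (n : ℕ) :
    ∑ r ∈ n.divisors, (ArithmeticFunction.moebius r : ℤ) = if n = 1 then 1 else 0 := by
  have h := congrArg (fun g : ArithmeticFunction ℤ => g n)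
    ArithmeticFunction.moebius_mul_coe_zeta
  simp only [ArithmeticFunction.coe_mul_zeta_apply, ArithmeticFunction.one_apply] at h
  exact h

theorem lambda_eq_moebius_inversion (k A R₂ : ℕ) (hk : 1 ≤ k)
    (hkp : ∀ p : ℕ, p.Prime → ¬ p ∣ A → k < p)
    (lam : ℕ → ℝ)
    (hsupp : ∀ d : ℕ, lam d ≠ 0 → Squarefree d ∧ Nat.Coprime d A ∧ d < R₂)
    (f f₁ : ℕ → ℝ)
    (hf : ∀ d : ℕ, f d = ∏ p ∈ d.primeFactors, ((p : ℝ) / k))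
    (hf₁ : ∀ d : ℕ, f₁ d = ∏ p ∈ d.primeFactors, (((p : ℝ) - k) / k))
    (y : ℕ → ℝ)
    (hy : ∀ r : ℕ, y r =
      ((ArithmeticFunction.moebius r : ℤ) : ℝ) * f₁ r *
        ∑ d ∈ (Finset.range R₂).filter
            (fun d => Squarefree d ∧ Nat.Coprime d A ∧ Nat.Coprime d r),
          lam (d * r) / f (d * r)) :
    ∀ d : ℕ, Squarefree d → Nat.Coprime d A →
      lam d = ((ArithmeticFunction.moebius d : ℤ) : ℝ) * f d *
        ∑ r ∈ (Finset.range R₂).filter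
            (fun r => Squarefree r ∧ Nat.Coprime r A ∧ Nat.Coprime r d),
          y (r * d) / f₁ (r * d) := by
  intro d hd hdA
  have hd0 : d ≠ 0 := hd.ne_zero
  have hd1 : 1 ≤ d := Nat.one_le_iff_ne_zero.mpr hd0
  have hk0 : (0 : ℝ) < (k : ℝ) := by exact_mod_cast hk
  have hfne : ∀ n : ℕ, f n ≠ 0 := by
    intro n
    rw [hf]
    refine Finset.prod_ne_zero_iff.mpr ?_
    intro p hp
    have hpp : p.Prime := Nat.prime_of_mem_primeFactors hp
    have hp0 : (0 : ℝ) < (p : ℝ) := by exact_mod_cast hpp.pos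
    positivity
  have hf1ne : ∀ n : ℕ, n.Coprime A → f₁ n ≠ 0 := by
    intro n hn
    rw [hf₁]
    refine Finset.prod_ne_zero_iff.mpr ?_
    intro p hp
    have hpp : p.Prime := Nat.prime_of_mem_primeFactors hp
    have hpd : p ∣ n := Nat.dvd_of_mem_primeFactors hp
    have hpA : ¬ p ∣ A := by
      intro h
      exact hpp.ne_one ((Nat.Coprime.coprime_dvd_left hpd hn).eq_one_of_dvd h)
    have hkp' := hkp p hpp hpA
    have h1 : (0 : ℝ) < (p : ℝ) - k := by
      have : (k : ℝ) < p := by exact_mod_cast hkp'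
      linarith
    positivity
  have hmu2 : ((ArithmeticFunction.moebius d : ℤ) : ℝ) *
      ((ArithmeticFunction.moebius d : ℤ) : ℝ) = 1 := by
    have h : (ArithmeticFunction.moebius d) * (ArithmeticFunction.moebius d) = 1 := by
      rw [ArithmeticFunction.moebius_apply_of_squarefree hd, ← pow_add, ← two_mul, pow_mul]
      norm_num
    exact_mod_cast h
  symm
  set S := (Finset.range R₂).filter
      (fun r => Squarefree r ∧ Nat.Coprime r A ∧ Nat.Coprime r d) with hSdef
  -- Step 1: substitute y and divide by f₁
  have step1 : ∀ r ∈ S, y (r * d) / f₁ (r * d)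
      = ((ArithmeticFunction.moebius r : ℤ) : ℝ) *
          ((ArithmeticFunction.moebius d : ℤ) : ℝ) *
        ∑ e ∈ (Finset.range R₂).filter
            (fun e => Squarefree e ∧ Nat.Coprime e A ∧ Nat.Coprime e (r * d)),
          lam (e * (r * d)) / f (e * (r * d)) := by
    intro r hr
    simp only [hSdef, Finset.mem_filter, Finset.mem_range] at hr
    obtain ⟨hrR, hrsq, hrA, hrd⟩ := hr
    have hrdsq : Squarefree (r * d) := Nat.squarefree_mul_iff.mpr ⟨hrd, hrsq, hd⟩
    have hrdA : (r * d).Coprime A := Nat.Coprime.mul hrA hdA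
    have hmul : (ArithmeticFunction.moebius (r * d) : ℤ)
        = ArithmeticFunction.moebius r * ArithmeticFunction.moebius d :=
      ArithmeticFunction.isMultiplicative_moebius.map_mul_of_coprime hrd
    have hne := hf1ne (r * d) hrdA
    rw [hy (r * d), hmul]
    push_cast
    field_simp
  rw [Finset.sum_congr rfl step1]
  -- Step 2: pull out μ d and cancel with μ d
  have step2 : ∑ r ∈ S, ((ArithmeticFunction.moebius r : ℤ) : ℝ) *
        ((ArithmeticFunction.moebius d : ℤ) : ℝ) *
        ∑ e ∈ (Finset.range R₂).filter
            (fun e => Squarefree e ∧ Nat.Coprime e A ∧ Nat.Coprime e (r * d)),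
          lam (e * (r * d)) / f (e * (r * d))
      = ((ArithmeticFunction.moebius d : ℤ) : ℝ) *
        ∑ r ∈ S, ((ArithmeticFunction.moebius r : ℤ) : ℝ) *
          ∑ e ∈ (Finset.range R₂).filter
              (fun e => Squarefree e ∧ Nat.Coprime e A ∧ Nat.Coprime e (r * d)),
            lam (e * (r * d)) / f (e * (r * d)) := by
    rw [Finset.mul_sum]
    exact Finset.sum_congr rfl (fun r _ => by ring)
  rw [step2, show ∀ X : ℝ, ((ArithmeticFunction.moebius d : ℤ) : ℝ) * f d *
      (((ArithmeticFunction.moebius d : ℤ) : ℝ) * X) = f d * X from fun X => by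
    calc ((ArithmeticFunction.moebius d : ℤ) : ℝ) * f d *
        (((ArithmeticFunction.moebius d : ℤ) : ℝ) * X)
        = (((ArithmeticFunction.moebius d : ℤ) : ℝ) *
            ((ArithmeticFunction.moebius d : ℤ) : ℝ)) * (f d * X) := by ring
      _ = f d * X := by rw [hmu2, one_mul]]
  -- Step 3: restrict inner sums to e * r < R₂
  have step3 : ∀ r ∈ S, ((ArithmeticFunction.moebius r : ℤ) : ℝ) *
        ∑ e ∈ (Finset.range R₂).filter
            (fun e => Squarefree e ∧ Nat.Coprime e A ∧ Nat.Coprime e (r * d)),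
          lam (e * (r * d)) / f (e * (r * d))
      = ∑ e ∈ ((Finset.range R₂).filter
            (fun e => Squarefree e ∧ Nat.Coprime e A ∧ Nat.Coprime e (r * d))).filter
            (fun e => e * r < R₂),
          ((ArithmeticFunction.moebius r : ℤ) : ℝ) *
            (lam (e * (r * d)) / f (e * (r * d))) := by
    intro r hr
    rw [Finset.mul_sum]
    refine (Finset.sum_filter_of_ne ?_).symm
    intro e _ hne
    have hlam : lam (e * (r * d)) ≠ 0 := by
      intro h0
      apply hne
      rw [h0, zero_div, mul_zero]
    have hlt := (hsupp _ hlam).2.2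
    have hle : e * r ≤ e * (r * d) := by
      rw [← mul_assoc]
      exact Nat.le_mul_of_pos_right _ (Nat.pos_of_ne_zero hd0)
    omega
  rw [Finset.sum_congr rfl step3]
  -- Step 4: reindex the double sum by m = e * r and its divisor r
  have step4 : ∑ r ∈ S, ∑ e ∈ ((Finset.range R₂).filter
          (fun e => Squarefree e ∧ Nat.Coprime e A ∧ Nat.Coprime e (r * d))).filter
          (fun e => e * r < R₂),
        ((ArithmeticFunction.moebius r : ℤ) : ℝ) * (lam (e * (r * d)) / f (e * (r * d)))
      = ∑ m ∈ S, ∑ r ∈ m.divisors,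
          ((ArithmeticFunction.moebius r : ℤ) : ℝ) * (lam (m * d) / f (m * d)) := by
    rw [Finset.sum_sigma', Finset.sum_sigma']
    refine Finset.sum_bij' (fun a _ => ⟨a.2 * a.1, a.1⟩) (fun b _ => ⟨b.2, b.1 / b.2⟩)
      ?_ ?_ ?_ ?_ ?_
    · rintro ⟨r, e⟩ ha
      simp only [Finset.mem_sigma, hSdef, Finset.mem_filter, Finset.mem_range,
        Nat.mem_divisors] at ha ⊢
      obtain ⟨⟨hrR, hrsq, hrA, hrd⟩, ⟨⟨heR, hesq, heA, herd⟩, herR⟩⟩ := ha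
      have her : Nat.Coprime e r := herd.coprime_dvd_right (dvd_mul_right r d)
      have hed : Nat.Coprime e d := herd.coprime_dvd_right (dvd_mul_left d r)
      have hersq : Squarefree (e * r) := Nat.squarefree_mul_iff.mpr ⟨her, hesq, hrsq⟩
      exact ⟨⟨herR, hersq, heA.mul hrA, hed.mul hrd⟩, dvd_mul_left r e, hersq.ne_zero⟩
    · rintro ⟨m, r⟩ hb
      simp only [Finset.mem_sigma, hSdef, Finset.mem_filter, Finset.mem_range,
        Nat.mem_divisors] at hb ⊢
      obtain ⟨⟨hmR, hmsq, hmA, hmd⟩, hrm, hm0⟩ := hb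
      have hmpos : 0 < m := Nat.pos_of_ne_zero hm0
      have hrle : r ≤ m := Nat.le_of_dvd hmpos hrm
      have hedvd : m / r ∣ m := Nat.div_dvd_of_dvd hrm
      have hele : m / r ≤ m := Nat.le_of_dvd hmpos hedvd
      have hmeq : r * (m / r) = m := Nat.mul_div_cancel' hrm
      have hresq : Squarefree (r * (m / r)) := by rw [hmeq]; exact hmsq
      have her : Nat.Coprime (m / r) r := (Nat.coprime_of_squarefree_mul hresq).symm
      have hed : Nat.Coprime (m / r) d := hmd.coprime_dvd_left hedvd
      refine ⟨⟨lt_of_le_of_lt hrle hmR, hmsq.squarefree_of_dvd hrm,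
        hmA.coprime_dvd_left hrm, hmd.coprime_dvd_left hrm⟩,
        ⟨lt_of_le_of_lt hele hmR, hmsq.squarefree_of_dvd hedvd,
          hmA.coprime_dvd_left hedvd, her.mul_right hed⟩, ?_⟩
      rw [Nat.div_mul_cancel hrm]
      exact hmR
    · rintro ⟨r, e⟩ ha
      simp only [Finset.mem_sigma, hSdef, Finset.mem_filter, Finset.mem_range] at ha
      have hr0 : 0 < r := Nat.pos_of_ne_zero ha.1.2.1.ne_zero
      exact Sigma.ext rfl (heq_of_eq (Nat.mul_div_cancel e hr0))
    · rintro ⟨m, r⟩ hb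
      simp only [Finset.mem_sigma, Nat.mem_divisors] at hb
      exact Sigma.ext (Nat.div_mul_cancel hb.2.1) HEq.rfl
    · rintro ⟨r, e⟩ _
      simp only
      rw [mul_assoc]
  rw [step4]
  -- Step 5: sum the Möbius function over divisors
  have step5 : ∀ m ∈ S, ∑ r ∈ m.divisors,
        ((ArithmeticFunction.moebius r : ℤ) : ℝ) * (lam (m * d) / f (m * d))
      = (if m = 1 then (1 : ℝ) else 0) * (lam (m * d) / f (m * d)) := by
    intro m _
    rw [← Finset.sum_mul]
    congr 1
    rw [← Int.cast_sum, sum_divisors_moebius' m]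
    split_ifs <;> simp
  rw [Finset.sum_congr rfl step5]
  simp only [ite_mul, one_mul, zero_mul]
  rw [Finset.sum_ite_eq' S 1 (fun m => lam (m * d) / f (m * d))]
  by_cases h1 : 1 ∈ S
  · rw [if_pos h1, one_mul, mul_comm, div_mul_cancel₀ _ (hfne d)]
  · rw [if_neg h1, mul_zero]
    by_contra hne
    have hlam : lam d ≠ 0 := fun h => hne h.symm
    have hdR := (hsupp d hlam).2.2
    apply h1
    simp only [hSdef, Finset.mem_filter, Finset.mem_range]
    exact ⟨by omega, squarefree_one, Nat.coprime_one_left _, Nat.coprime_one_left _⟩
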